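/- Suppose prox-EB holds with parameters μ, δ, σ₀ > 0. There is a universal constant C > 0 (independent of all problem data) such that for every x ∈ X, every σ ∈ [0, min(σ₀, δ/C_f)], and every y ∈ T(x,σ), the lower-level suboptimality of y is at most quadratic in σ: 0 ≤ g(x,y) − g*(x) ≤ C · (l_{f,0}²/μ) · σ². -/

import Mathlib

open Set Metric

set_option maxHeartbeats 1000000 in
/-- Under prox-EB with parameters `μ, δ, σ₀ > 0`, there is a universal
constant `C > 0` such that for every `x ∈ X`, every `σ ∈ [0, min(σ₀, δ/C_f)]`, and every
`y ∈ T(x,σ)`: `0 ≤ g(x,y) − g*(x) ≤ C (l_{f,0}²/μ) σ²`. -/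
theorem stmt13 :
    ∃ C : ℝ, 0 < C ∧
    ∀ (dx dy : ℕ)
      (X : Set (EuclideanSpace ℝ (Fin dx)))
      (Y : Set (EuclideanSpace ℝ (Fin dy)))
      (f g : EuclideanSpace ℝ (Fin dx) → EuclideanSpace ℝ (Fin dy) → ℝ)
      (lf0 lf1 lg1 Cf μ δ σ₀ ρ : ℝ)
      (prox : EuclideanSpace ℝ (Fin dx) → ℝ → EuclideanSpace ℝ (Fin dy) →
        EuclideanSpace ℝ (Fin dy))
      (T : EuclideanSpace ℝ (Fin dx) → ℝ → Set (EuclideanSpace ℝ (Fin dy)))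
      (gstar : EuclideanSpace ℝ (Fin dx) → ℝ)
      (hXne : X.Nonempty) (hXclosed : IsClosed X) (hXconv : Convex ℝ X)
      (hYne : Y.Nonempty) (hYclosed : IsClosed Y) (hYconv : Convex ℝ Y)
      (hYbdd : Bornology.IsBounded Y)
      (hfC2 : ContDiff ℝ 2 (Function.uncurry f))
      (hgC2 : ContDiff ℝ 2 (Function.uncurry g))
      (hLipf : ∀ p q : EuclideanSpace ℝ (Fin dx) × EuclideanSpace ℝ (Fin dy),
        ‖fderiv ℝ (Function.uncurry f) p - fderiv ℝ (Function.uncurry f) q‖ ≤ lf1 * ‖p - q‖)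
      (hLipg : ∀ p q : EuclideanSpace ℝ (Fin dx) × EuclideanSpace ℝ (Fin dy),
        ‖fderiv ℝ (Function.uncurry g) p - fderiv ℝ (Function.uncurry g) q‖ ≤ lg1 * ‖p - q‖)
      (hlf0 : ∀ x ∈ X, ∀ y ∈ Y, ‖gradient (fun y' => f x y') y‖ ≤ lf0)
      -- `C_f` is the supremum of `|f|` over `X × Y`
      (hCf : IsLUB ((fun p : EuclideanSpace ℝ (Fin dx) × EuclideanSpace ℝ (Fin dy) =>
        |f p.1 p.2|) '' (X ×ˢ Y)) Cf)
      (hμ : 0 < μ) (hδ : 0 < δ) (hσ₀ : 0 < σ₀)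
      (hρpos : 0 < ρ) (hρ : ρ ≤ 1 / (8 * lg1)) (hσ₀l : σ₀ * lf1 ≤ lg1)
      -- `prox x σ y` is the unique minimizer over `z ∈ Y` of `ρ h_σ(x,z) + ‖z − y‖²/2`
      (hprox : ∀ x (σ : ℝ), σ ∈ Icc 0 σ₀ → ∀ y, prox x σ y ∈ Y ∧ ∀ z ∈ Y,
        ρ * (σ * f x (prox x σ y) + g x (prox x σ y)) + ‖prox x σ y - y‖ ^ 2 / 2
          ≤ ρ * (σ * f x z + g x z) + ‖z - y‖ ^ 2 / 2)
      -- the lower-level solution set `T(x,σ)`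
      (hT : ∀ x σ, T x σ = {y ∈ Y | ∀ z ∈ Y, σ * f x y + g x y ≤ σ * f x z + g x z})
      -- prox-EB
      (hEB : ∀ x ∈ X, ∀ σ ∈ Icc (0:ℝ) σ₀, ∀ y ∈ Y,
        ρ⁻¹ * ‖y - prox x σ y‖ ≤ δ →
          μ * infDist y (T x σ) ≤ ρ⁻¹ * ‖y - prox x σ y‖)
      -- the lower-level optimal value `g*(x) = min_{z ∈ Y} g(x,z)`
      (hgstar : ∀ x, gstar x = sInf ((fun z => g x z) '' Y)),
      ∀ x ∈ X, ∀ σ ∈ Icc (0:ℝ) (min σ₀ (δ / Cf)), ∀ y ∈ T x σ,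
        0 ≤ g x y - gstar x ∧ g x y - gstar x ≤ C * (lf0 ^ 2 / μ) * σ ^ 2 := by
  refine ⟨2, by norm_num, ?_⟩
  intro dx dy X Y f g lf0 lf1 lg1 Cf μ δ σ₀ ρ prox T gstar
    hXne hXclosed hXconv hYne hYclosed hYconv hYbdd hfC2 hgC2 hLipf hLipg hlf0 hCf
    hμ hδ hσ₀ hρpos hρ hσ₀l hprox hT hEB hgstar x hx σ hσ y hy
  obtain ⟨hσ0, hσle⟩ := hσ
  have hσσ₀ : σ ≤ σ₀ := le_trans hσle (min_le_left _ _)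
  have hYcpt : IsCompact Y := Metric.isCompact_of_isClosed_isBounded hYclosed hYbdd
  -- continuity of f x ∙ and g x ∙
  have hfc : Continuous (fun w => f x w) :=
    hfC2.continuous.comp (continuous_const.prodMk continuous_id)
  have hgc : Continuous (fun w => g x w) :=
    hgC2.continuous.comp (continuous_const.prodMk continuous_id)
  -- Lipschitz property of f x ∙ on Y
  have hdiff : ∀ y' : EuclideanSpace ℝ (Fin dy), DifferentiableAt ℝ (fun w => f x w) y' := by
    intro y'
    exact ((hfC2.differentiable (by norm_num)).differentiableAt).comp y'
      (DifferentiableAt.prodMk (differentiableAt_const x) differentiableAt_id)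
  have flip : ∀ z ∈ Y, ∀ p ∈ Y, |f x z - f x p| ≤ lf0 * ‖z - p‖ := by
    intro z hz p hp
    have bound : ∀ y' ∈ Y, ‖fderiv ℝ (fun w => f x w) y'‖ ≤ lf0 := by
      intro y' hy'
      have := hlf0 x hx y' hy'
      rwa [gradient, LinearIsometryEquiv.norm_map] at this
    have := hYconv.norm_image_sub_le_of_norm_fderiv_le (fun w _ => hdiff w) bound hp hz
    simpa [Real.norm_eq_abs] using this
  have hlf0nn : 0 ≤ lf0 :=
    le_trans (norm_nonneg _) (hlf0 x hx hYne.choose hYne.choose_spec)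
  -- membership characterization for T x s
  have hTmem : ∀ (s : ℝ) (z), z ∈ T x s ↔
      z ∈ Y ∧ ∀ w ∈ Y, s * f x z + g x z ≤ s * f x w + g x w := by
    intro s z
    rw [hT]
    exact Set.mem_sep_iff
  have hcont : ∀ s : ℝ, Continuous (fun w => s * f x w + g x w) := fun s =>
    ((continuous_const.mul hfc).add hgc)
  have hTne : ∀ s : ℝ, (T x s).Nonempty := by
    intro s
    obtain ⟨z, hz, hmin⟩ := hYcpt.exists_isMinOn hYne (hcont s).continuousOn
    exact ⟨z, (hTmem s z).2 ⟨hz, fun w hw => hmin hw⟩⟩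
  have hTsub : ∀ s : ℝ, T x s ⊆ Y := by
    intro s z hz
    exact ((hTmem s z).1 hz).1
  have hTcpt : ∀ s : ℝ, IsCompact (T x s) := by
    intro s
    refine hYcpt.of_isClosed_subset ?_ (hTsub s)
    rw [hT]
    have : {y ∈ Y | ∀ z ∈ Y, s * f x y + g x y ≤ s * f x z + g x z}
        = Y ∩ ⋂ z ∈ Y, {y | s * f x y + g x y ≤ s * f x z + g x z} := by
      ext w
      simp [Set.mem_iInter, Set.mem_sep_iff]
    rw [this]
    exact hYclosed.inter
      (isClosed_biInter fun z _ => isClosed_le (hcont s) continuous_const)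
  -- the key step lemma
  have step : ∀ s ∈ Icc (0:ℝ) σ₀, ∀ s' ∈ Icc (0:ℝ) σ₀, ∀ z ∈ T x s,
      2 * |s - s'| * lf0 ≤ δ →
      ∃ z' ∈ T x s', dist z z' ≤ 2 * |s - s'| * lf0 / μ := by
    intro s hs s' hs' z hz hsmall
    obtain ⟨hzY, hzmin⟩ := (hTmem s z).1 hz
    obtain ⟨hpY, hpmin⟩ := hprox x s' hs' z
    set p := prox x s' z with hp
    have h1 := hpmin z hzY
    simp only [sub_self, norm_zero] at h1
    have h2 := hzmin p hpY
    have h4 : (s' - s) * (f x z - f x p) ≤ |s - s'| * (lf0 * ‖z - p‖) := by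
      calc (s' - s) * (f x z - f x p) ≤ |(s' - s) * (f x z - f x p)| := le_abs_self _
        _ = |s - s'| * |f x z - f x p| := by rw [abs_mul, abs_sub_comm]
        _ ≤ |s - s'| * (lf0 * ‖z - p‖) :=
            mul_le_mul_of_nonneg_left (flip z hzY p hpY) (abs_nonneg _)
    have h4' := mul_le_mul_of_nonneg_left h4 hρpos.le
    have h2' := mul_le_mul_of_nonneg_left h2 hρpos.le
    have h5 : ‖z - p‖ = ‖p - z‖ := norm_sub_rev _ _
    rw [← h5] at h1
    norm_num at h1
    have key : ‖z - p‖ ^ 2 / 2 ≤ ρ * (|s - s'| * lf0 * ‖z - p‖) := by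
      nlinarith [h1, h2', h4']
    have hc : 0 ≤ ρ * (|s - s'| * lf0) := by positivity
    have hnorm : ‖z - p‖ ≤ 2 * (ρ * (|s - s'| * lf0)) := by
      rcases (norm_nonneg (z - p)).lt_or_eq with hpos | heq
      · nlinarith [key, hpos]
      · rw [← heq]; linarith
    have hres : ρ⁻¹ * ‖z - p‖ ≤ 2 * |s - s'| * lf0 := by
      rw [inv_mul_le_iff₀ hρpos]
      nlinarith [hnorm]
    have heb := hEB x hx s' hs' z hzY (hres.trans hsmall)
    have hinf : infDist z (T x s') ≤ 2 * |s - s'| * lf0 / μ := by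
      rw [le_div_iff₀ hμ]
      nlinarith [heb, hres]
    obtain ⟨z', hz', hdz⟩ := (hTcpt s').exists_infDist_eq_dist (hTne s') z
    exact ⟨z', hz', by rw [← hdz]; exact hinf⟩
  -- set up the discretization
  set N : ℕ := max 1 ⌈2 * σ * lf0 / δ⌉₊ with hNdef
  have hN1 : 1 ≤ N := le_max_left _ _
  have hNpos : (0:ℝ) < N := by exact_mod_cast Nat.lt_of_lt_of_le Nat.zero_lt_one hN1
  have hN0 : (N:ℝ) ≠ 0 := ne_of_gt hNpos
  set t : ℝ := σ / N with htdef
  have ht0 : 0 ≤ t := div_nonneg hσ0 hNpos.le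
  have htN : (N:ℝ) * t = σ := by rw [htdef]; field_simp
  have hstep : 2 * t * lf0 ≤ δ := by
    have hceil : 2 * σ * lf0 / δ ≤ (N:ℝ) := by
      refine le_trans (Nat.le_ceil _) ?_
      exact_mod_cast le_max_right 1 ⌈2 * σ * lf0 / δ⌉₊
    rw [div_le_iff₀ hδ] at hceil
    have he : 2 * t * lf0 = 2 * σ * lf0 / N := by rw [htdef]; ring
    rw [he, div_le_iff₀ hNpos]
    nlinarith [hceil]
  obtain ⟨hyY, hymin⟩ := (hTmem σ y).1 hy
  -- main induction
  have key : ∀ j : ℕ, j ≤ N → ∃ z ∈ T x (((N:ℝ) - (j:ℝ)) * t),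
      ‖z - y‖ ≤ 2 * (lf0 / μ) * t * (j:ℝ) ∧
      σ * f x y + g x y ≤ ((N:ℝ) - (j:ℝ)) * t * f x z + g x z
        + t * (j:ℝ) * f x y + lf0 ^ 2 / μ * t ^ 2 * ((j:ℝ) * ((j:ℝ) + 1)) := by
    intro j
    induction j with
    | zero =>
      intro _
      refine ⟨y, ?_, by simp, ?_⟩
      · simpa only [Nat.cast_zero, sub_zero, htN] using hy
      · simp only [Nat.cast_zero, sub_zero, htN, mul_zero, zero_mul, add_zero, zero_add]
        ring_nf
        linarith [le_refl (σ * f x y + g x y)]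
    | succ j ih =>
      intro hj
      obtain ⟨z, hzT, hznorm, hzval⟩ := ih (Nat.le_of_succ_le hj)
      have hjN : (j:ℝ) + 1 ≤ (N:ℝ) := by exact_mod_cast hj
      have hs_mem : ((N:ℝ) - (j:ℝ)) * t ∈ Icc (0:ℝ) σ₀ := by
        constructor
        · apply mul_nonneg _ ht0; linarith
        · calc ((N:ℝ) - (j:ℝ)) * t ≤ (N:ℝ) * t := by
                apply mul_le_mul_of_nonneg_right _ ht0
                linarith [Nat.cast_nonneg (α := ℝ) j]
            _ = σ := htN
            _ ≤ σ₀ := hσσ₀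
      have hs'_mem : ((N:ℝ) - ((j:ℝ) + 1)) * t ∈ Icc (0:ℝ) σ₀ := by
        constructor
        · apply mul_nonneg _ ht0; linarith
        · calc ((N:ℝ) - ((j:ℝ) + 1)) * t ≤ (N:ℝ) * t := by
                apply mul_le_mul_of_nonneg_right _ ht0
                linarith [Nat.cast_nonneg (α := ℝ) j]
            _ = σ := htN
            _ ≤ σ₀ := hσσ₀
      have hΔ : |((N:ℝ) - (j:ℝ)) * t - ((N:ℝ) - ((j:ℝ) + 1)) * t| = t := by
        rw [show ((N:ℝ) - (j:ℝ)) * t - ((N:ℝ) - ((j:ℝ) + 1)) * t = t by ring]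
        exact abs_of_nonneg ht0
      obtain ⟨z', hz'T, hdist⟩ := step _ hs_mem _ hs'_mem z hzT
        (by rw [hΔ]; exact hstep)
      have hz'Y : z' ∈ Y := hTsub _ hz'T
      have hzY : z ∈ Y := hTsub _ hzT
      have hz'z : ‖z' - z‖ ≤ 2 * t * lf0 / μ := by
        rw [hΔ] at hdist
        rw [norm_sub_rev, ← dist_eq_norm]
        exact hdist
      have hz'y : ‖z' - y‖ ≤ 2 * (lf0 / μ) * t * ((j:ℝ) + 1) := by
        have h6 : z' - y = (z' - z) + (z - y) := by abel
        calc ‖z' - y‖ = ‖(z' - z) + (z - y)‖ := by rw [h6]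
          _ ≤ ‖z' - z‖ + ‖z - y‖ := norm_add_le _ _
          _ ≤ 2 * t * lf0 / μ + 2 * (lf0 / μ) * t * (j:ℝ) := add_le_add hz'z hznorm
          _ = 2 * (lf0 / μ) * t * ((j:ℝ) + 1) := by ring
      refine ⟨z', ?_, ?_, ?_⟩
      · push_cast
        exact hz'T
      · push_cast
        exact hz'y
      · push_cast
        have hB : ((N:ℝ) - (j:ℝ)) * t * f x z + g x z
            ≤ ((N:ℝ) - (j:ℝ)) * t * f x z' + g x z' :=
          ((hTmem _ z).1 hzT).2 z' hz'Y
        have hC : f x z' - f x y ≤ lf0 * ‖z' - y‖ :=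
          le_trans (le_abs_self _) (flip z' hz'Y y hyY)
        have hD : lf0 * ‖z' - y‖ ≤ lf0 * (2 * (lf0 / μ) * t * ((j:ℝ) + 1)) :=
          mul_le_mul_of_nonneg_left hz'y hlf0nn
        have hE : t * (f x z' - f x y) ≤ t * (lf0 * (2 * (lf0 / μ) * t * ((j:ℝ) + 1))) :=
          mul_le_mul_of_nonneg_left (le_trans hC hD) ht0
        have hE2 : t * (lf0 * (2 * (lf0 / μ) * t * ((j:ℝ) + 1)))
            = 2 * (lf0 ^ 2 / μ) * t ^ 2 * ((j:ℝ) + 1) := by ring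
        rw [hE2] at hE
        linarith [hzval, hB, hE]
  -- conclude
  obtain ⟨zN, hzNT, _, hzNval⟩ := key N (le_refl N)
  have hzN0 : zN ∈ T x 0 := by
    have e : ((N:ℝ) - (N:ℝ)) * t = 0 := by ring
    rwa [e] at hzNT
  obtain ⟨hzNY, hzNmin⟩ := (hTmem 0 zN).1 hzN0
  have hzNmin' : ∀ w ∈ Y, g x zN ≤ g x w := by
    intro w hw
    have := hzNmin w hw
    simpa using this
  have hgstar' : gstar x = g x zN := by
    rw [hgstar x]
    exact IsLeast.csInf_eq ⟨⟨zN, hzNY, rfl⟩, by rintro _ ⟨w, hw, rfl⟩; exact hzNmin' w hw⟩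
  have hquad : t ^ 2 * ((N:ℝ) * ((N:ℝ) + 1)) ≤ 2 * σ ^ 2 := by
    rw [← htN]
    have h2N : (N:ℝ) + 1 ≤ 2 * (N:ℝ) := by
      have : (1:ℝ) ≤ (N:ℝ) := by exact_mod_cast hN1
      linarith
    nlinarith [sq_nonneg t, mul_nonneg (sq_nonneg t) hNpos.le]
  have hKnn : 0 ≤ lf0 ^ 2 / μ := by positivity
  have hfin : g x y ≤ g x zN + 2 * (lf0 ^ 2 / μ) * σ ^ 2 := by
    have := hzNval
    have e1 : ((N:ℝ) - (N:ℝ)) * t * f x zN = 0 := by ring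
    have e2 : t * (N:ℝ) * f x y = σ * f x y := by rw [← htN]; ring
    rw [e1, e2] at this
    have h7 : lf0 ^ 2 / μ * t ^ 2 * ((N:ℝ) * ((N:ℝ) + 1)) ≤ lf0 ^ 2 / μ * (2 * σ ^ 2) := by
      calc lf0 ^ 2 / μ * t ^ 2 * ((N:ℝ) * ((N:ℝ) + 1))
          = lf0 ^ 2 / μ * (t ^ 2 * ((N:ℝ) * ((N:ℝ) + 1))) := by ring
        _ ≤ lf0 ^ 2 / μ * (2 * σ ^ 2) := mul_le_mul_of_nonneg_left hquad hKnn
    linarith [this, h7]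
  constructor
  · rw [hgstar']
    linarith [hzNmin' y hyY]
  · rw [hgstar']
    linarith [hfin]
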